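/- Let S = [[A, B], [C, D]] be a symplectic matrix. Then ℝ^d decomposes as the direct sum ℝ^d = (ker B)ᗮ ⊕ DᵀA(ker B). -/

import Mathlib

open Matrix

lemma toEucl_mul_apply {d : ℕ} (M N : Matrix (Fin d) (Fin d) ℝ) (v : EuclideanSpace ℝ (Fin d)) :
    Matrix.toEuclideanLin (M * N) v = Matrix.toEuclideanLin M (Matrix.toEuclideanLin N v) := by
  simp [Matrix.toEuclideanLin_apply, Matrix.mulVec_mulVec]

lemma range_transpose_le_perp {d : ℕ} (B : Matrix (Fin d) (Fin d) ℝ)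
    (v : EuclideanSpace ℝ (Fin d)) :
    Matrix.toEuclideanLin Bᵀ v ∈ (LinearMap.ker (Matrix.toEuclideanLin B))ᗮ := by
  intro k hk
  have hBt : Matrix.toEuclideanLin Bᵀ = LinearMap.adjoint (Matrix.toEuclideanLin B) := by
    simpa using Matrix.toEuclideanLin_conjTranspose_eq_adjoint B
  rw [hBt, LinearMap.adjoint_inner_right, LinearMap.mem_ker.mp hk, inner_zero_left]

theorem symplectic_kerB_perp_compl_DTA_kerB {d : ℕ} (A B C D : Matrix (Fin d) (Fin d) ℝ)
    (hS : (fromBlocks A B C D)ᵀ * fromBlocks 0 1 (-1) 0 * fromBlocks A B C D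
        = fromBlocks (0 : Matrix (Fin d) (Fin d) ℝ) 1 (-1) 0) :
    IsCompl ((LinearMap.ker (Matrix.toEuclideanLin B))ᗮ)
      ((LinearMap.ker (Matrix.toEuclideanLin B)).map (Matrix.toEuclideanLin (Dᵀ * A))) := by
  have h1 : Dᵀ * A = 1 + Bᵀ * C := by
    rw [fromBlocks_transpose, fromBlocks_multiply, fromBlocks_multiply] at hS
    have h := (fromBlocks_inj.mp hS).2.2.1
    simp only [Matrix.mul_zero, Matrix.mul_one, Matrix.mul_neg, Matrix.zero_mul,
      Matrix.one_mul, zero_add, add_zero, Matrix.neg_mul] at h ⊢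
    linear_combination (norm := abel) -h
  set K := LinearMap.ker (Matrix.toEuclideanLin B) with hK
  -- key pointwise formula
  have hT : ∀ x : EuclideanSpace ℝ (Fin d),
      Matrix.toEuclideanLin (Dᵀ * A) x = x + Matrix.toEuclideanLin Bᵀ (Matrix.toEuclideanLin C x) := by
    intro x
    rw [h1, map_add, LinearMap.add_apply, toEucl_mul_apply]
    congr 1
    simp [Matrix.toEuclideanLin_apply]
  constructor
  · rw [Submodule.disjoint_def]
    rintro z hz1 ⟨x, hx, rfl⟩
    have hx' : x ∈ Kᗮ := by
      have : x = Matrix.toEuclideanLin (Dᵀ * A) x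
          - Matrix.toEuclideanLin Bᵀ (Matrix.toEuclideanLin C x) := by
        rw [hT x]; abel
      rw [this]
      exact Submodule.sub_mem _ hz1 (range_transpose_le_perp B _)
    have hx0 : x = 0 := by
      have := Submodule.inf_orthogonal_eq_bot K
      have : x ∈ (⊥ : Submodule ℝ (EuclideanSpace ℝ (Fin d))) := by
        rw [← this]; exact ⟨hx, hx'⟩
      simpa using this
    simp [hx0]
  · rw [codisjoint_iff_le_sup]
    intro y _
    obtain ⟨p, hp, q, hq, rfl⟩ := Submodule.mem_sup.mp
      (by rw [Submodule.sup_orthogonal_of_hasOrthogonalProjection (K := K)]; trivial :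
        y ∈ K ⊔ Kᗮ)
    refine Submodule.mem_sup.mpr ⟨p + q - Matrix.toEuclideanLin (Dᵀ * A) p, ?_,
      Matrix.toEuclideanLin (Dᵀ * A) p, ⟨p, hp, rfl⟩, by abel⟩
    have : p + q - Matrix.toEuclideanLin (Dᵀ * A) p
        = q - Matrix.toEuclideanLin Bᵀ (Matrix.toEuclideanLin C p) := by
      rw [hT p]; abel
    rw [this]
    exact Submodule.sub_mem _ hq (range_transpose_le_perp B _)
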